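/- (One Point Theorem) Suppose C' = (1, c_2, ..., c_{n-1}) is orderly and c_{n-1} < c_n, and let m = ⌈c_n / c_{n-1}⌉. Then the coin system C = (1, c_2, ..., c_{n-1}, c_n) is orderly if and only if grd_C(m·c_{n-1}) ≤ m. -/

import Mathlib

/-- The largest coin value in `C` that is at most `v` (or 0 if none). -/
def coinMax (C : List ℕ) (v : ℕ) : ℕ := (C.filter (· ≤ v)).foldr max 0

/-- Fuelled greedy coin count. -/
def grdAux (C : List ℕ) : ℕ → ℕ → ℕ
  | 0, _ => 0
  | fuel + 1, v =>
    let c := coinMax C v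
    if v = 0 ∨ c = 0 then 0 else 1 + grdAux C fuel (v - c)

/-- Number of coins used by the greedy algorithm to represent `v` with coin system `C`. -/
def grd (C : List ℕ) (v : ℕ) : ℕ := grdAux C v v

/-- The set of sizes of representations of `v` as nonnegative integer combinations of
the coin values in `C`. -/
def reprCosts (C : List ℕ) (v : ℕ) : Set ℕ :=
  {k | ∃ x : List ℕ, x.length = C.length ∧ (List.zipWith (· * ·) x C).sum = v ∧ x.sum = k}

/-- Minimum number of coins needed to represent `v` with coin system `C`. -/
noncomputable def opt (C : List ℕ) (v : ℕ) : ℕ := sInf (reprCosts C v)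

/-- A coin system is orderly if greedy is optimal for every positive value. -/
def Orderly (C : List ℕ) : Prop := ∀ v : ℕ, 0 < v → grd C v = opt C v

lemma foldrmax_mem {l : List ℕ} (h : l.foldr max 0 ≠ 0) : l.foldr max 0 ∈ l := by
  induction l with
  | nil => simp at h
  | cons a t ih =>
    simp only [List.foldr_cons] at h ⊢
    rcases max_choice a (t.foldr max 0) with h1 | h1 <;> rw [h1] at h ⊢
    · exact List.mem_cons_self
    · exact List.mem_cons_of_mem _ (ih h)

lemma le_foldrmax {l : List ℕ} {a : ℕ} (h : a ∈ l) : a ≤ l.foldr max 0 := by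
  induction l with
  | nil => simp at h
  | cons b t ih =>
    rcases List.mem_cons.1 h with rfl | h
    · exact le_max_left _ _
    · exact le_trans (ih h) (le_max_right _ _)

lemma foldrmax_le {l : List ℕ} {v : ℕ} (h : ∀ a ∈ l, a ≤ v) : l.foldr max 0 ≤ v := by
  induction l with
  | nil => simp
  | cons b t ih =>
    simp only [List.foldr_cons, max_le_iff]
    exact ⟨h b (List.mem_cons_self), ih fun a ha => h a (List.mem_cons_of_mem _ ha)⟩

lemma coinMax_le_self (C : List ℕ) (v : ℕ) : coinMax C v ≤ v :=
  foldrmax_le fun a ha => by simpa using (List.mem_filter.1 ha).2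

lemma coinMax_mem {C : List ℕ} {v : ℕ} (h : coinMax C v ≠ 0) : coinMax C v ∈ C :=
  (List.mem_filter.1 (foldrmax_mem h)).1

lemma le_coinMax {C : List ℕ} {v a : ℕ} (ha : a ∈ C) (hav : a ≤ v) : a ≤ coinMax C v :=
  le_foldrmax (List.mem_filter.2 ⟨ha, by simpa using hav⟩)

lemma grdAux_stable (C : List ℕ) : ∀ f₁ v f₂, v ≤ f₁ → v ≤ f₂ →
    grdAux C f₁ v = grdAux C f₂ v := by
  intro f₁
  induction f₁ with
  | zero => intro v f₂ h1 _; interval_cases v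
            cases f₂ <;> simp [grdAux]
  | succ g ih =>
    intro v f₂ h1 h2
    rcases Nat.eq_zero_or_pos v with rfl | hv
    · cases f₂ <;> simp [grdAux]
    · cases f₂ with
      | zero => omega
      | succ g₂ =>
        by_cases hc : coinMax C v = 0
        · simp [grdAux, hc]
        · have hc1 : 1 ≤ coinMax C v := Nat.one_le_iff_ne_zero.2 hc
          simp only [grdAux, hv.ne', hc, or_self, if_false]
          congr 1
          exact ih _ g₂ (by omega) (by omega)

lemma grd_step {C : List ℕ} {v : ℕ} (hv : 0 < v) (hc : coinMax C v ≠ 0) :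
    grd C v = 1 + grd C (v - coinMax C v) := by
  have hle := coinMax_le_self C v
  have hc1 : 1 ≤ coinMax C v := Nat.one_le_iff_ne_zero.2 hc
  obtain ⟨u, rfl⟩ : ∃ u, v = u + 1 := ⟨v - 1, by omega⟩
  unfold grd
  simp only [grdAux, hv.ne', hc, or_self, if_false]
  congr 1
  exact grdAux_stable C _ _ _ (by omega) (by omega)

lemma grd_zero (C : List ℕ) : grd C 0 = 0 := by simp [grd, grdAux]

lemma zipWith_mul_replicate_zero (C : List ℕ) :
    (List.zipWith (· * ·) (List.replicate C.length 0) C).sum = 0 := by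
  induction C with
  | nil => simp
  | cons a t ih => simpa [List.replicate_succ] using ih

lemma zero_mem_reprCosts (C : List ℕ) : (0 : ℕ) ∈ reprCosts C 0 :=
  ⟨List.replicate C.length 0, by simp, zipWith_mul_replicate_zero C, by simp⟩

lemma opt_zero (C : List ℕ) : opt C 0 = 0 :=
  Nat.eq_zero_of_le_zero (Nat.sInf_le (zero_mem_reprCosts C))

lemma zipWith_add_mul_sum : ∀ (C x y : List ℕ), x.length = C.length → y.length = C.length →
    (List.zipWith (· * ·) (List.zipWith (· + ·) x y) C).sum =
      (List.zipWith (· * ·) x C).sum + (List.zipWith (· * ·) y C).sum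
  | [], _, _, _, _ => by simp
  | c :: t, [], y, hx, hy => by simp at hx
  | c :: t, x0 :: xs, [], hx, hy => by simp at hy
  | c :: t, x0 :: xs, y0 :: ys, hx, hy => by
    simp only [List.zipWith_cons_cons, List.sum_cons]
    rw [zipWith_add_mul_sum t xs ys (by simpa using hx) (by simpa using hy)]
    ring

lemma zipWith_add_sum : ∀ (x y : List ℕ), x.length = y.length →
    (List.zipWith (· + ·) x y).sum = x.sum + y.sum
  | [], [], _ => by simp
  | [], y0 :: ys, h => by simp at h
  | x0 :: xs, [], h => by simp at h
  | x0 :: xs, y0 :: ys, h => by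
    simp only [List.zipWith_cons_cons, List.sum_cons]
    rw [zipWith_add_sum xs ys (by simpa using h)]
    ring

lemma rep_add {C : List ℕ} {a b k₁ k₂ : ℕ} (h₁ : k₁ ∈ reprCosts C a)
    (h₂ : k₂ ∈ reprCosts C b) : k₁ + k₂ ∈ reprCosts C (a + b) := by
  obtain ⟨x, hx1, hx2, hx3⟩ := h₁
  obtain ⟨y, hy1, hy2, hy3⟩ := h₂
  refine ⟨List.zipWith (· + ·) x y, ?_, ?_, ?_⟩
  · rw [List.length_zipWith, hx1, hy1, min_self]
  · rw [zipWith_add_mul_sum C x y hx1 hy1, hx2, hy2]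
  · rw [zipWith_add_sum x y (hx1.trans hy1.symm), hx3, hy3]

lemma coin_rep {C : List ℕ} {a : ℕ} (ha : a ∈ C) : (1 : ℕ) ∈ reprCosts C a := by
  induction C with
  | nil => simp at ha
  | cons c t ih =>
    rcases List.mem_cons.1 ha with rfl | ha
    · exact ⟨1 :: List.replicate t.length 0, by simp, by simpa using zipWith_mul_replicate_zero t,
        by simp⟩
    · obtain ⟨x, hx1, hx2, hx3⟩ := ih ha
      exact ⟨0 :: x, by simpa using hx1, by simpa using hx2, by simpa using hx3⟩

lemma repr_exists {t : List ℕ} (v : ℕ) : ∃ k, k ∈ reprCosts (1 :: t) v :=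
  ⟨v, v :: List.replicate t.length 0, by simp, by simpa using zipWith_mul_replicate_zero t,
    by simp⟩

lemma opt_le_one {C : List ℕ} {a : ℕ} (ha : a ∈ C) : opt C a ≤ 1 :=
  Nat.sInf_le (coin_rep ha)

lemma opt_mem {t : List ℕ} (v : ℕ) : opt (1 :: t) v ∈ reprCosts (1 :: t) v :=
  Nat.sInf_mem (repr_exists v)

lemma opt_le_add {t : List ℕ} (a b : ℕ) :
    opt (1 :: t) (a + b) ≤ opt (1 :: t) a + opt (1 :: t) b :=
  Nat.sInf_le (rep_add (opt_mem a) (opt_mem b))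

lemma opt_le_mul {t : List ℕ} {a : ℕ} (ha : a ∈ (1 :: t)) (k : ℕ) :
    opt (1 :: t) (k * a) ≤ k := by
  induction k with
  | zero => simp [opt_zero]
  | succ n ih =>
    have : (n + 1) * a = n * a + a := by ring
    rw [this]
    calc opt (1 :: t) (n * a + a) ≤ opt (1 :: t) (n * a) + opt (1 :: t) a := opt_le_add _ _
    _ ≤ n + 1 := Nat.add_le_add ih (opt_le_one ha)

lemma rep_sum_zero {C : List ℕ} {v : ℕ} (h : (0 : ℕ) ∈ reprCosts C v) : v = 0 := by
  obtain ⟨x, hx1, hx2, hx3⟩ := h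
  subst hx2
  have : ∀ y ∈ x, y = 0 := by
    intro y hy
    exact Nat.eq_zero_of_le_zero (hx3 ▸ List.le_sum_of_mem hy)
  clear hx3
  induction C generalizing x with
  | nil => simp
  | cons c t ih =>
    cases x with
    | nil => simp
    | cons x0 xs =>
      simp only [List.zipWith_cons_cons, List.sum_cons]
      rw [this x0 (List.mem_cons_self), ih xs (by simpa using hx1)
        (fun y hy => this y (List.mem_cons_of_mem _ hy))]
      simp

lemma opt_pos {t : List ℕ} {v : ℕ} (hv : 0 < v) : 0 < opt (1 :: t) v := by
  rcases Nat.eq_zero_or_pos (opt (1 :: t) v) with h | h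
  · exact absurd (rep_sum_zero (h ▸ opt_mem v)) hv.ne'
  · exact h

lemma grd_mem {t : List ℕ} : ∀ v, grd (1 :: t) v ∈ reprCosts (1 :: t) v := by
  intro v
  induction v using Nat.strong_induction_on with
  | _ v ih =>
    rcases Nat.eq_zero_or_pos v with rfl | hv
    · rw [grd_zero]; exact zero_mem_reprCosts _
    · have h1 : 1 ≤ coinMax (1 :: t) v := le_coinMax (List.mem_cons_self) hv
      have hc : coinMax (1 :: t) v ≠ 0 := by omega
      have hle := coinMax_le_self (1 :: t) v
      rw [grd_step hv hc]
      have := rep_add (coin_rep (coinMax_mem hc)) (ih (v - coinMax (1 :: t) v) (by omega))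
      rwa [Nat.add_sub_cancel' hle] at this

lemma opt_le_grd {t : List ℕ} (v : ℕ) : opt (1 :: t) v ≤ grd (1 :: t) v :=
  Nat.sInf_le (grd_mem v)

lemma rep_pad {C : List ℕ} {c v k : ℕ} (h : k ∈ reprCosts C v) :
    k ∈ reprCosts (C ++ [c]) v := by
  obtain ⟨x, hx1, hx2, hx3⟩ := h
  refine ⟨x ++ [0], by simp [hx1], ?_, by simp [hx3]⟩
  rw [List.zipWith_append hx1]
  simp [hx2]

lemma rep_split {C : List ℕ} {c v k : ℕ} (h : k ∈ reprCosts (C ++ [c]) v) :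
    ∃ y a, y.length = C.length ∧ (List.zipWith (· * ·) y C).sum + a * c = v ∧ y.sum + a = k := by
  obtain ⟨x, hx1, hx2, hx3⟩ := h
  have hxne : x ≠ [] := by
    intro h; subst h; simp at hx1
  refine ⟨x.dropLast, x.getLast hxne, ?_, ?_, ?_⟩
  · simp at hx1 ⊢; omega
  · have hd : x.dropLast.length = C.length := by simp at hx1 ⊢; omega
    rw [← List.dropLast_append_getLast hxne, List.zipWith_append hd] at hx2
    simpa using hx2
  · conv_rhs => rw [← hx3, ← List.dropLast_append_getLast hxne]
    simp

lemma opt_append_le {C : List ℕ} {c v : ℕ} (t : List ℕ) (hC : C = 1 :: t) :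
    opt (C ++ [c]) v ≤ opt C v := by
  subst hC
  exact Nat.sInf_le (rep_pad (opt_mem v))

lemma term_le_rep {C : List ℕ} {c v k : ℕ} (h : k ∈ reprCosts (C ++ [c]) v) :
    ∃ y a, y.length = C.length ∧ (List.zipWith (· * ·) y C).sum + a * c = v ∧ y.sum + a = k :=
  rep_split h

lemma opt_append_lt {t : List ℕ} {c v : ℕ} (hv : v < c) :
    opt ((1 :: t) ++ [c]) v = opt (1 :: t) v := by
  refine le_antisymm (opt_append_le t rfl) ?_
  have hmem : opt ((1 :: t) ++ [c]) v ∈ reprCosts ((1 :: t) ++ [c]) v := by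
    have : (1 :: t) ++ [c] = 1 :: (t ++ [c]) := by simp
    rw [this] at *
    exact opt_mem v
  obtain ⟨y, a, hy1, hy2, hy3⟩ := rep_split hmem
  have ha : a = 0 := by
    rcases Nat.eq_zero_or_pos a with h | h
    · exact h
    · exfalso
      have : c ≤ a * c := Nat.le_mul_of_pos_left c h
      omega
  subst ha
  rw [Nat.add_zero] at hy3
  rw [Nat.zero_mul, Nat.add_zero] at hy2
  exact Nat.sInf_le ⟨y, hy1, hy2, hy3⟩

lemma coinMax_append_lt {C : List ℕ} {c v : ℕ} (h : v < c) :
    coinMax (C ++ [c]) v = coinMax C v := by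
  unfold coinMax
  rw [List.filter_append]
  have : [c].filter (· ≤ v) = [] := by simp [Nat.not_le.2 h]
  rw [this, List.append_nil]

lemma coinMax_append_ge {C : List ℕ} {c v : ℕ} (hall : ∀ a ∈ C, a ≤ c) (h : c ≤ v)
    (hc : 0 < c) : coinMax (C ++ [c]) v = c := by
  refine le_antisymm ?_ (le_coinMax (by simp) h)
  have hne : coinMax (C ++ [c]) v ≠ 0 := by
    have := le_coinMax (C := C ++ [c]) (a := c) (by simp) h
    omega
  rcases List.mem_append.1 (coinMax_mem hne) with hm | hm
  · exact hall _ hm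
  · simp at hm; omega

lemma grd_coinMax_zero {C : List ℕ} {v : ℕ} (h : coinMax C v = 0) : grd C v = 0 := by
  rcases Nat.eq_zero_or_pos v with rfl | hv
  · exact grd_zero C
  · obtain ⟨u, rfl⟩ : ∃ u, v = u + 1 := ⟨v - 1, by omega⟩
    simp [grd, grdAux, h]

lemma grd_append_lt {C : List ℕ} {c : ℕ} : ∀ v, v < c → grd (C ++ [c]) v = grd C v := by
  intro v
  induction v using Nat.strong_induction_on with
  | _ v ih =>
    intro hvc
    rcases Nat.eq_zero_or_pos v with rfl | hv
    · rw [grd_zero, grd_zero]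
    · by_cases hc : coinMax C v = 0
      · rw [grd_coinMax_zero (by rw [coinMax_append_lt hvc]; exact hc), grd_coinMax_zero hc]
      · have h1 : 1 ≤ coinMax C v := Nat.one_le_iff_ne_zero.2 hc
        have hle := coinMax_le_self C v
        rw [grd_step hv (by rw [coinMax_append_lt hvc]; exact hc), grd_step hv hc,
          coinMax_append_lt hvc]
        rw [ih (v - coinMax C v) (by omega) (by omega)]

lemma grd_append_ge {C : List ℕ} {c v : ℕ} (hall : ∀ a ∈ C, a ≤ c) (hc : 0 < c) (h : c ≤ v) :
    grd (C ++ [c]) v = 1 + grd (C ++ [c]) (v - c) := by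
  have := coinMax_append_ge hall h hc
  rw [grd_step (by omega) (by omega), this]

lemma grd_step_last {C : List ℕ} {b v : ℕ} (hb : b ∈ C) (hall : ∀ a ∈ C, a ≤ b)
    (hb1 : 0 < b) (h : b ≤ v) : grd C v = 1 + grd C (v - b) := by
  have hcm : coinMax C v = b := by
    refine le_antisymm ?_ (le_coinMax hb h)
    have hne : coinMax C v ≠ 0 := by have := le_coinMax hb h; omega
    exact hall _ (coinMax_mem hne)
  rw [grd_step (by omega) (by omega), hcm]

lemma grd_iterate {C : List ℕ} {b r : ℕ} (hb : b ∈ C) (hall : ∀ a ∈ C, a ≤ b)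
    (hb1 : 0 < b) (hr : r < b) : ∀ q, grd C (q * b + r) = q + grd C r := by
  intro q
  induction q with
  | zero => simp
  | succ n ih =>
    have hge : b ≤ (n + 1) * b + r := by nlinarith
    rw [grd_step_last hb hall hb1 hge]
    have : (n + 1) * b + r - b = n * b + r := by
      have : (n + 1) * b = n * b + b := by ring
      omega
    rw [this, ih]
    ring


theorem stmt_5 (C' : List ℕ) (hne : C' ≠ [])
    (hchain : List.Chain' (· < ·) C') (hhead : C'.getD 0 0 = 1)
    (hord : Orderly C') (c : ℕ) (hc : C'.getLast hne < c)
    (m : ℕ) (hm : m = (c + C'.getLast hne - 1) / C'.getLast hne) :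
    Orderly (C' ++ [c]) ↔ grd (C' ++ [c]) (m * C'.getLast hne) ≤ m := by
  obtain ⟨t, hCt⟩ : ∃ t, C' = 1 :: t := by
    cases C' with
    | nil => exact absurd rfl hne
    | cons a s => simp only [List.getD] at hhead; exact ⟨s, by simp at hhead; rw [hhead]⟩
  set b := C'.getLast hne with hb
  -- basic facts
  have hbmem : b ∈ C' := List.getLast_mem hne
  have hall : ∀ a ∈ C', a ≤ b := by
    have hp : List.Pairwise (· < ·) C' := List.isChain_iff_pairwise.mp hchain
    have hsplit : C' = C'.dropLast ++ [b] := (List.dropLast_append_getLast hne).symm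
    intro a ha
    rw [hsplit] at hp ha
    rcases List.mem_append.1 ha with h | h
    · exact le_of_lt ((List.pairwise_append.1 hp).2.2 a h b (List.mem_singleton_self _))
    · simp at h; omega
  have h1mem : (1 : ℕ) ∈ C' := by rw [hCt]; exact List.mem_cons_self
  have hb1 : 0 < b := hall 1 h1mem
  have hallc : ∀ a ∈ C', a ≤ c := fun a ha => le_of_lt (lt_of_le_of_lt (hall a ha) hc)
  have hc0 : 0 < c := by omega
  -- opt lemmas specialized (C' = 1 :: t, C' ++ [c] = 1 :: (t ++ [c]))
  have hoptmemC' : ∀ v, opt C' v ∈ reprCosts C' v := by rw [hCt]; exact opt_mem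
  have hoptmemC : ∀ v, opt (C' ++ [c]) v ∈ reprCosts (C' ++ [c]) v := by
    rw [hCt]; exact fun v => opt_mem (t := t ++ [c]) v
  have hoptaddC' : ∀ a b', opt C' (a + b') ≤ opt C' a + opt C' b' := by
    rw [hCt]; exact opt_le_add
  have hoptmulC' : ∀ k, opt C' (k * b) ≤ k := by rw [hCt] at hbmem ⊢; exact opt_le_mul hbmem
  have hoptgrdC' : ∀ v, opt C' v ≤ grd C' v := by rw [hCt]; exact opt_le_grd
  have hoptgrdC : ∀ v, opt (C' ++ [c]) v ≤ grd (C' ++ [c]) v := by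
    rw [hCt]; exact fun v => opt_le_grd (t := t ++ [c]) v
  have hoptltc : ∀ v, v < c → opt (C' ++ [c]) v = opt C' v := by
    rw [hCt]; exact fun v hv => opt_append_lt hv
  have hoptleC : ∀ v, opt (C' ++ [c]) v ≤ opt C' v := by
    intro v; exact opt_append_le t hCt
  -- grd equality including zero
  have hG : ∀ u, grd C' u = opt C' u := by
    intro u
    rcases Nat.eq_zero_or_pos u with rfl | hu
    · rw [grd_zero, opt_zero]
    · exact hord u hu
  -- ceiling facts
  have hc1 : 1 ≤ c := hc0
  have hmeq : m = (c - 1) / b + 1 := by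
    have h' : c + b - 1 = (c - 1) + b := by omega
    rw [hm, h', Nat.add_div_right _ hb1]
  obtain ⟨c0, rfl⟩ : ∃ c0, c = c0 + 1 := ⟨c - 1, by omega⟩
  obtain ⟨X, hX⟩ : ∃ X, X = (c0 / b) * b := ⟨_, rfl⟩
  have hq1 : X ≤ c0 := by rw [hX]; exact Nat.div_mul_le_self _ _
  have hq2 : c0 < X + b := by
    rw [hX]
    have h := Nat.div_add_mod c0 b
    rw [Nat.mul_comm] at h
    have h2 := Nat.mod_lt c0 hb1
    omega
  have hmb : m * b = X + b := by
    rw [hmeq, hX]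
    simp only [Nat.add_sub_cancel]
    ring
  have hcle : c0 + 1 ≤ m * b := by rw [hmb]; omega
  set d := m * b - (c0 + 1) with hd
  have hd2 : d < b := by rw [hd, hmb]; omega
  have hdeq : m * b = (c0 + 1) + d := by rw [hd, hmb]; omega
  have hm2 : 2 ≤ m := by
    by_contra h
    have hm1 : m ≤ 1 := by omega
    have : m * b ≤ 1 * b := Nat.mul_le_mul_right b hm1
    rw [one_mul] at this
    omega
  set c := c0 + 1 with hc'
  -- greedy step for C at values ≥ c
  have hgstep : ∀ v, c ≤ v → grd (C' ++ [c]) v = 1 + grd (C' ++ [c]) (v - c) :=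
    fun v hv => grd_append_ge hallc hc0 hv
  constructor
  · -- easy direction
    intro hOrd
    have hpos : 0 < m * b := by omega
    rw [hOrd _ hpos]
    calc opt (C' ++ [c]) (m * b) ≤ opt C' (m * b) := hoptleC _
    _ ≤ m := hoptmulC' m
  · -- hard direction
    intro hcond
    -- condition gives opt C' d ≤ m - 1
    have hdopt : opt C' d ≤ m - 1 := by
      have h1 : grd (C' ++ [c]) (m * b) = 1 + grd (C' ++ [c]) d := by
        rw [hgstep _ hcle]
      have h2 : grd (C' ++ [c]) d = grd C' d := grd_append_lt d (by omega)
      have := hoptgrdC' d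
      rw [h1, h2, hG d] at hcond
      omega
    -- main induction
    have main : ∀ v, grd (C' ++ [c]) v ≤ opt (C' ++ [c]) v := by
      intro v
      induction v using Nat.strong_induction_on with
      | _ v ih =>
        rcases Nat.eq_zero_or_pos v with rfl | hv
        · rw [grd_zero, opt_zero]
        rcases Nat.lt_or_ge v c with hvc | hvc
        · rw [grd_append_lt v hvc, hoptltc v hvc, hG v]
        -- v ≥ c
        obtain ⟨y, a, hy1, hy2, hy3⟩ := rep_split (hoptmemC v)
        rcases Nat.eq_zero_or_pos a with rfl | ha
        · -- optimal representation avoids c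
          rw [Nat.zero_mul, Nat.add_zero] at hy2
          rw [Nat.add_zero] at hy3
          have hkC' : opt C' v ≤ opt (C' ++ [c]) v := Nat.sInf_le ⟨y, hy1, hy2, hy3⟩
          have hkeq : opt (C' ++ [c]) v = opt C' v := le_antisymm (hoptleC v) hkC'
          rw [hkeq, ← hG v]
          -- show grd C v ≤ grd C' v
          obtain ⟨q, r, hqr, hr⟩ : ∃ q r, v = q * b + r ∧ r < b :=
            ⟨v / b, v % b, by rw [mul_comm]; exact (Nat.div_add_mod v b).symm, Nat.mod_lt v hb1⟩
          have hgv : grd C' v = q + grd C' r := by rw [hqr]; exact grd_iterate hbmem hall hb1 hr q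
          have hqm : m - 1 ≤ q := by
            by_contra h
            have hq : q ≤ m - 2 := by omega
            have : q * b ≤ (m - 2) * b := Nat.mul_le_mul_right b hq
            have h2 : (m - 2) * b + b = (m - 1) * b := by
              have : m - 1 = (m - 2) + 1 := by omega
              rw [this]; ring
            have h3 : (m - 1) * b + b = m * b := by
              have : m = (m - 1) + 1 := by omega
              conv_rhs => rw [this]
              ring
            omega
          rcases Nat.lt_or_ge q m with hqlt | hqge
          · -- q = m - 1 case
            have hq : q = m - 1 := by omega
            subst hq
            obtain ⟨Y, hY⟩ : ∃ Y, Y = (m - 1) * b := ⟨_, rfl⟩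
            have hYb : Y + b = m * b := by
              rw [hY]
              have : m = (m - 1) + 1 := by omega
              conv_rhs => rw [this]
              ring
            set s := v - c with hs
            have hsb : s + b = r + d := by
              rw [← hY] at hqr
              omega
            have hsc : s < c := by omega
            have hslt : s < b := by omega
            have hstep2 : grd C' (r + d) = 1 + grd C' s := by
              have harg : r + d - b = s := by omega
              rw [grd_step_last hbmem hall hb1 (by omega : b ≤ r + d), harg]
            have hrd : opt C' (r + d) ≤ opt C' r + (m - 1) :=
              le_trans (hoptaddC' r d) (by omega)
            have : 1 + grd C' s ≤ opt C' r + (m - 1) := by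
              rw [← hstep2, hG (r + d)]; exact hrd
            rw [hgstep v hvc, grd_append_lt (v - c) (by omega), ← hs, hgv, hG r]
            omega
          · -- q ≥ m case
            have hkey : v - c = (q - m) * b + (d + r) := by
              have h1 : q * b = (q - m) * b + m * b := by
                rw [← Nat.add_mul, Nat.sub_add_cancel hqge]
              rw [hqr, h1]
              omega
            have hstep3 : opt C' (v - c) ≤ (q - m) + (m - 1) + opt C' r := by
              rw [hkey]
              calc opt C' ((q - m) * b + (d + r))
                  ≤ opt C' ((q - m) * b) + opt C' (d + r) := hoptaddC' _ _
                _ ≤ opt C' ((q - m) * b) + (opt C' d + opt C' r) :=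
                    Nat.add_le_add_left (hoptaddC' d r) _
                _ ≤ (q - m) + ((m - 1) + opt C' r) :=
                    Nat.add_le_add (hoptmulC' _) (Nat.add_le_add_right hdopt _)
                _ = (q - m) + (m - 1) + opt C' r := by ring
            have hih : grd (C' ++ [c]) (v - c) ≤ opt (C' ++ [c]) (v - c) :=
              ih (v - c) (by omega)
            have hih2 : grd (C' ++ [c]) (v - c) ≤ (q - m) + (m - 1) + opt C' r :=
              le_trans hih (le_trans (hoptleC _) hstep3)
            rw [hgstep v hvc, hgv, hG r]
            omega
        · -- optimal representation uses c
          obtain ⟨a0, rfl⟩ : ∃ a0, a = a0 + 1 := ⟨a - 1, by omega⟩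
          have hrep : (y.sum + a0) ∈ reprCosts (C' ++ [c]) (v - c) := by
            refine ⟨y ++ [a0], by simp [hy1], ?_, by simp⟩
            rw [List.zipWith_append hy1]
            have h5 : (a0 + 1) * c = a0 * c + c := by ring
            rw [h5] at hy2
            simp only [List.zipWith_cons_cons, List.zipWith_nil_right, List.sum_append,
              List.sum_cons, List.sum_nil]
            omega
          have hoptvc : opt (C' ++ [c]) (v - c) ≤ y.sum + a0 := Nat.sInf_le hrep
          have hih : grd (C' ++ [c]) (v - c) ≤ opt (C' ++ [c]) (v - c) :=
            ih (v - c) (by omega)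
          rw [hgstep v hvc]
          omega
    intro v hv
    exact le_antisymm (main v) (hoptgrdC v)
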